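/- Let m = n = 2 and h(θ) = max{|θ_1|, |θ_2|, |θ_1 − θ_2|}, with generated norm H on ℝ^{2×2}. Set e_1 = (1, 0), e_2 = (1/2, √3/2), e_3 = (1/2, −√3/2), θ¹ = (1, 1), θ² = (1, 0), θ³ = (0, 1), and p_{-1} = e_1, p_{-2} = e_1 + e_2, p_{-3} = e_1 + e_3, p_{+i} = −p_{-i} for i = 1, 2, 3. Let F_0 = θ² (δ_{p_{-2}} − δ_{p_{+2}}) + θ³ (δ_{p_{-3}} − δ_{p_{+3}}) and let F be the ℝ^{2×2}-valued measure F = θ¹ ⊗ e_1 ℋ¹⌞[p_{+1}, p_{-1}] + θ² ⊗ e_2 ℋ¹⌞([p_{+2}, p_{+1}] ∪ [p_{-1}, p_{-2}]) + θ³ ⊗ e_3 ℋ¹⌞([p_{+3}, p_{+1}] ∪ [p_{-1}, p_{-3}]). Then ∂F = F_0 and F minimizes |·|_H among all compactly supported finite ℝ^{2×2}-valued Borel measures G with ∂G = F_0. -/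

import Mathlib

open MeasureTheory

noncomputable section

/-- `ℝ^n` with the Euclidean norm. -/
abbrev Euc (n : ℕ) := EuclideanSpace ℝ (Fin n)

/-- `h` is a norm on `ℝ^m`. -/
def IsNorm {m : ℕ} (h : (Fin m → ℝ) → ℝ) : Prop :=
  (∀ x y, h (x + y) ≤ h x + h y) ∧ (∀ (c : ℝ) (x), h (c • x) = |c| * h x) ∧
    ∀ x, h x = 0 → x = 0

/-- The dual norm `h_*` of `h`: `h_*(g) = sup { g·θ : h θ ≤ 1 }`. -/
def dualNorm {m : ℕ} (h : (Fin m → ℝ) → ℝ) (g : Fin m → ℝ) : ℝ :=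
  sSup {r | ∃ θ : Fin m → ℝ, h θ ≤ 1 ∧ r = ∑ i, g i * θ i}

/-- Matrix-vector product `M u`. -/
def matVec {m n : ℕ} (M : Fin m → Fin n → ℝ) (u : Euc n) : Fin m → ℝ :=
  fun i => ∑ j, M i j * u j

/-- Frobenius inner product `M : N`. -/
def frob {m n : ℕ} (M N : Fin m → Fin n → ℝ) : ℝ := ∑ i, ∑ j, M i j * N i j

/-- `M ∈ ∂H(0)`, i.e. `h_*(M u) ≤ 1` for all `|u| ≤ 1`. -/
def inSubdiffH {m n : ℕ} (h : (Fin m → ℝ) → ℝ) (M : Fin m → Fin n → ℝ) : Prop :=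
  ∀ u : Euc n, ‖u‖ ≤ 1 → dualNorm h (matVec M u) ≤ 1

/-- The norm `H` on `ℝ^{m×n}` generated by `h`:
`H(N) = sup { M:N : M ∈ ∂H(0) }`. -/
def genNorm {m n : ℕ} (h : (Fin m → ℝ) → ℝ) (N : Fin m → Fin n → ℝ) : ℝ :=
  sSup {r | ∃ M : Fin m → Fin n → ℝ, inSubdiffH h M ∧ r = frob M N}

/-- The rank-one matrix `θ ⊗ e`. -/
def outer {m n : ℕ} (θ : Fin m → ℝ) (e : Euc n) : Fin m → Fin n → ℝ :=
  fun i j => θ i * e j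

/-- An `ℝ^{m×n}`-valued Borel measure on `ℝ^n`, given by its component signed measures. -/
abbrev MatMeas (m n : ℕ) := Fin m → Fin n → MeasureTheory.SignedMeasure (Euc n)

/-- An `ℝ^m`-valued Borel measure on `ℝ^n`, given by its component signed measures. -/
abbrev VecMeas (m n : ℕ) := Fin m → MeasureTheory.SignedMeasure (Euc n)

/-- Integral of a function against a signed measure (via the Jordan decomposition). -/
def sInt {n : ℕ} (ν : MeasureTheory.SignedMeasure (Euc n)) (f : Euc n → ℝ) : ℝ :=
  ∫ x, f x ∂ν.toJordanDecomposition.posPart - ∫ x, f x ∂ν.toJordanDecomposition.negPart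

/-- The total variation `|F|_H` of `F` with respect to the norm `H` generated by `h`:
the supremum of `Σ_k H(F(B_k))` over countable Borel partitions `(B_k)` of `ℝ^n`. -/
def tvH {m n : ℕ} (h : (Fin m → ℝ) → ℝ) (F : MatMeas m n) : ℝ :=
  sSup {r | ∃ B : ℕ → Set (Euc n), (∀ k, MeasurableSet (B k)) ∧
    Pairwise (Function.onFun Disjoint B) ∧ (⋃ k, B k) = Set.univ ∧
    r = ∑' k, genNorm h (fun i j => F i j (B k))}

/-- `F` is supported in `K`: it vanishes on Borel sets disjoint from `K`. -/
def suppIn {m n : ℕ} (F : MatMeas m n) (K : Set (Euc n)) : Prop :=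
  ∀ B : Set (Euc n), MeasurableSet B → Disjoint B K → ∀ i j, F i j B = 0

/-- `F` is compactly supported. -/
def suppInCpt {m n : ℕ} (F : MatMeas m n) : Prop :=
  ∃ K : Set (Euc n), IsCompact K ∧ suppIn F K

/-- `F₀` is compactly supported. -/
def vSuppInCpt {m n : ℕ} (F0 : VecMeas m n) : Prop :=
  ∃ K : Set (Euc n), IsCompact K ∧
    ∀ B : Set (Euc n), MeasurableSet B → Disjoint B K → ∀ i, F0 i B = 0

/-- The Jacobian matrix `Dψ(x) ∈ ℝ^{m×n}` of `ψ : ℝ^n → ℝ^m`. -/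
def jac {m n : ℕ} (ψ : Euc n → (Fin m → ℝ)) (x : Euc n) : Fin m → Fin n → ℝ :=
  fun i j => fderiv ℝ ψ x (EuclideanSpace.single j 1) i

/-- `∂F = F₀`, i.e. `∫ Dψ : dF = ∫ ψ · dF₀` for all smooth compactly supported `ψ`. -/
def isBoundary {m n : ℕ} (F : MatMeas m n) (F0 : VecMeas m n) : Prop :=
  ∀ ψ : Euc n → (Fin m → ℝ), ContDiff ℝ (⊤ : ℕ∞) ψ → HasCompactSupport ψ →
    (∑ i, ∑ j, sInt (F i j) fun x => jac ψ x i j) = ∑ i, sInt (F0 i) fun x => ψ x i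

/-- `φ` is an admissible dual potential: `h_*(φ(y) - φ(x)) ≤ |y - x|`. -/
def admissible {m n : ℕ} (h : (Fin m → ℝ) → ℝ) (φ : Euc n → Fin m → ℝ) : Prop :=
  ∀ x y : Euc n, dualNorm h (φ y - φ x) ≤ ‖y - x‖

/-- The dual objective `∫ φ · dF₀`. -/
def intDual {m n : ℕ} (F0 : VecMeas m n) (φ : Euc n → Fin m → ℝ) : ℝ :=
  ∑ i, sInt (F0 i) fun x => φ x i

open scoped ENNReal

/-- The norm `h(θ) = max{|θ₁|, |θ₂|, |θ₁ - θ₂|}` on `ℝ²`. -/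
def h2 : (Fin 2 → ℝ) → ℝ := fun θ => max (max |θ 0| |θ 1|) |θ 0 - θ 1|

/-- A point of `ℝ²`. -/
def pt (a b : ℝ) : Euc 2 := WithLp.toLp 2 ![a, b]

/-- The value of the Dirac measure `δ_p` on the set `B`. -/
def dirac01 (p : Euc 2) (B : Set (Euc 2)) : ℝ := Set.indicator B (fun _ => 1) p

/-- The value on `B` of the measure `θ ⊗ e ℋ¹⌞S`, at entry `(i, j)`. -/
def segMass (S : Set (Euc 2)) (θ : Fin 2 → ℝ) (e : Euc 2) (B : Set (Euc 2))
    (i j : Fin 2) : ℝ :=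
  (μH[1] (B ∩ S)).toReal * (θ i * e j)

def e1 : Euc 2 := pt 1 0
def e2 : Euc 2 := pt (1/2) (Real.sqrt 3 / 2)
def e3 : Euc 2 := pt (1/2) (-(Real.sqrt 3) / 2)
def θ1 : Fin 2 → ℝ := ![1, 1]
def θ2 : Fin 2 → ℝ := ![1, 0]
def θ3 : Fin 2 → ℝ := ![0, 1]

def pm1 : Euc 2 := e1
def pm2 : Euc 2 := e1 + e2
def pm3 : Euc 2 := e1 + e3
def pp1 : Euc 2 := -pm1
def pp2 : Euc 2 := -pm2
def pp3 : Euc 2 := -pm3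

namespace S14

/-! ### Section 1: the dual norm of `h2` -/

lemma pair_le (g θ : Fin 2 → ℝ) (hθ : h2 θ ≤ 1) :
    g 0 * θ 0 + g 1 * θ 1 ≤ max (max |g 0| |g 1|) |g 0 + g 1| := by
  have h0 : |θ 0| ≤ 1 := le_trans (le_trans (le_max_left _ _) (le_max_left _ _)) hθ
  have h1 : |θ 1| ≤ 1 := le_trans (le_trans (le_max_right _ _) (le_max_left _ _)) hθ
  have h2' : |θ 0 - θ 1| ≤ 1 := le_trans (le_max_right _ _) hθ
  rw [abs_le] at h0 h1 h2'
  have A : |g 0| ≤ max (max |g 0| |g 1|) |g 0 + g 1| := le_trans (le_max_left _ _) (le_max_left _ _)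
  have B : |g 1| ≤ max (max |g 0| |g 1|) |g 0 + g 1| := le_trans (le_max_right _ _) (le_max_left _ _)
  have C : |g 0 + g 1| ≤ max (max |g 0| |g 1|) |g 0 + g 1| := le_max_right _ _
  rcases le_total 0 (g 0) with hg0 | hg0 <;> rcases le_total 0 (g 1) with hg1 | hg1 <;>
    rcases le_total 0 (g 0 + g 1) with hgs | hgs
  · refine le_trans ?_ (le_trans (le_abs_self _) C); nlinarith
  · refine le_trans ?_ (le_trans (le_abs_self _) C); nlinarith
  · refine le_trans ?_ (le_trans (le_abs_self (g 0)) A)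
    nlinarith [mul_nonneg hgs (by linarith : (0:ℝ) ≤ 1 - θ 0),
      mul_nonneg (by linarith : (0:ℝ) ≤ -(g 1)) (by linarith : (0:ℝ) ≤ θ 1 - θ 0 + 1)]
  · refine le_trans ?_ (le_trans (neg_le_abs (g 1)) B)
    nlinarith [mul_nonneg hg0 (by linarith : (0:ℝ) ≤ 1 - (θ 0 - θ 1)),
      mul_nonneg (by linarith : (0:ℝ) ≤ -(g 0 + g 1)) (by linarith : (0:ℝ) ≤ θ 1 + 1)]
  · refine le_trans ?_ (le_trans (le_abs_self (g 1)) B)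
    nlinarith [mul_nonneg hgs (by linarith : (0:ℝ) ≤ 1 - θ 1),
      mul_nonneg (by linarith : (0:ℝ) ≤ -(g 0)) (by linarith : (0:ℝ) ≤ θ 0 - θ 1 + 1)]
  · refine le_trans ?_ (le_trans (neg_le_abs (g 0)) A)
    nlinarith [mul_nonneg hg1 (by linarith : (0:ℝ) ≤ 1 - (θ 1 - θ 0)),
      mul_nonneg (by linarith : (0:ℝ) ≤ -(g 0 + g 1)) (by linarith : (0:ℝ) ≤ θ 0 + 1)]
  · refine le_trans ?_ (le_trans (neg_le_abs _) C); nlinarith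
  · refine le_trans ?_ (le_trans (neg_le_abs _) C); nlinarith

lemma absθ_le (θ : Fin 2 → ℝ) (hθ : h2 θ ≤ 1) (i : Fin 2) : |θ i| ≤ 1 := by
  fin_cases i
  · exact le_trans (le_trans (le_max_left _ _) (le_max_left _ _)) hθ
  · exact le_trans (le_trans (le_max_right _ _) (le_max_left _ _)) hθ

lemma dualSet_bdd (g : Fin 2 → ℝ) :
    ∀ r ∈ {r | ∃ θ : Fin 2 → ℝ, h2 θ ≤ 1 ∧ r = ∑ i, g i * θ i}, r ≤ |g 0| + |g 1| := by
  rintro r ⟨θ, hθ, rfl⟩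
  rw [Fin.sum_univ_two]
  have b0 : g 0 * θ 0 ≤ |g 0| := le_trans (le_abs_self _)
    (by rw [abs_mul]; exact mul_le_of_le_one_right (abs_nonneg _) (absθ_le θ hθ 0))
  have b1 : g 1 * θ 1 ≤ |g 1| := le_trans (le_abs_self _)
    (by rw [abs_mul]; exact mul_le_of_le_one_right (abs_nonneg _) (absθ_le θ hθ 1))
  linarith

lemma dualSet_bddAbove (g : Fin 2 → ℝ) :
    BddAbove {r | ∃ θ : Fin 2 → ℝ, h2 θ ≤ 1 ∧ r = ∑ i, g i * θ i} :=
  ⟨|g 0| + |g 1|, fun r hr => dualSet_bdd g r hr⟩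

lemma le_dualNorm (g θ : Fin 2 → ℝ) (hθ : h2 θ ≤ 1) :
    g 0 * θ 0 + g 1 * θ 1 ≤ dualNorm h2 g := by
  refine le_csSup (dualSet_bddAbove g) ⟨θ, hθ, ?_⟩
  rw [Fin.sum_univ_two]

lemma dualNorm_le (g : Fin 2 → ℝ) :
    dualNorm h2 g ≤ max (max |g 0| |g 1|) |g 0 + g 1| := by
  refine Real.sSup_le ?_ (le_trans (abs_nonneg _) (le_max_right _ _))
  rintro r ⟨θ, hθ, rfl⟩
  rw [Fin.sum_univ_two]
  exact pair_le g θ hθ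

lemma h2_theta1 : h2 θ1 ≤ 1 := by simp [h2, θ1]
lemma h2_theta2 : h2 θ2 ≤ 1 := by simp [h2, θ2]
lemma h2_theta3 : h2 θ3 ≤ 1 := by simp [h2, θ3]

lemma abs_le_dualNorm (g : Fin 2 → ℝ) (i : Fin 2) : |g i| ≤ dualNorm h2 g := by
  have c0 : |g 0| ≤ dualNorm h2 g := by
    rcases le_total 0 (g 0) with hg | hg
    · have := le_dualNorm g ![1, 0] (by simp [h2]);
      rw [abs_of_nonneg hg]; simpa using this
    · have := le_dualNorm g ![-1, 0] (by simp [h2])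
      rw [abs_of_nonpos hg]; simpa using this
  have c1 : |g 1| ≤ dualNorm h2 g := by
    rcases le_total 0 (g 1) with hg | hg
    · have := le_dualNorm g ![0, 1] (by simp [h2]); rw [abs_of_nonneg hg]; simpa using this
    · have := le_dualNorm g ![0, -1] (by simp [h2]); rw [abs_of_nonpos hg]; simpa using this
  fin_cases i
  · exact c0
  · exact c1

end S14
namespace S14

/-! ### Section 2: admissible matrices and `genNorm` -/

lemma matVec_single (M : Fin 2 → Fin 2 → ℝ) (j : Fin 2) :
    matVec M (EuclideanSpace.single j 1) = fun i => M i j := by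
  funext i
  simp [matVec, EuclideanSpace.single_apply]

lemma entry_le {M : Fin 2 → Fin 2 → ℝ} (hM : inSubdiffH h2 M) (i j : Fin 2) : |M i j| ≤ 1 := by
  have h := hM (EuclideanSpace.single j 1) (by rw [EuclideanSpace.norm_single]; simp)
  rw [matVec_single] at h
  exact le_trans (abs_le_dualNorm (fun i => M i j) i) h

lemma zero_mem_subdiff : inSubdiffH h2 (0 : Fin 2 → Fin 2 → ℝ) := by
  intro u hu
  refine le_trans (dualNorm_le _) ?_
  simp [matVec]

lemma frob_abs_le {M : Fin 2 → Fin 2 → ℝ} (hM : inSubdiffH h2 M) (N : Fin 2 → Fin 2 → ℝ) :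
    frob M N ≤ ∑ i, ∑ j, |N i j| := by
  refine Finset.sum_le_sum fun i _ => Finset.sum_le_sum fun j _ => ?_
  calc M i j * N i j ≤ |M i j * N i j| := le_abs_self _
    _ = |M i j| * |N i j| := abs_mul _ _
    _ ≤ 1 * |N i j| := by
        exact mul_le_mul_of_nonneg_right (entry_le hM i j) (abs_nonneg _)
    _ = |N i j| := one_mul _

lemma genNormSet_bddAbove (N : Fin 2 → Fin 2 → ℝ) :
    BddAbove {r | ∃ M : Fin 2 → Fin 2 → ℝ, inSubdiffH h2 M ∧ r = frob M N} := by
  refine ⟨∑ i, ∑ j, |N i j|, ?_⟩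
  rintro r ⟨M, hM, rfl⟩
  exact frob_abs_le hM N

lemma le_genNorm {M : Fin 2 → Fin 2 → ℝ} (hM : inSubdiffH h2 M) (N : Fin 2 → Fin 2 → ℝ) :
    frob M N ≤ genNorm h2 N :=
  le_csSup (genNormSet_bddAbove N) ⟨M, hM, rfl⟩

lemma genNorm_nonneg (N : Fin 2 → Fin 2 → ℝ) : 0 ≤ genNorm h2 N := by
  have := le_genNorm zero_mem_subdiff N
  simpa [frob] using this

lemma genNorm_le {c : ℝ} (hc : 0 ≤ c) (N : Fin 2 → Fin 2 → ℝ)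
    (hub : ∀ M : Fin 2 → Fin 2 → ℝ, inSubdiffH h2 M → frob M N ≤ c) :
    genNorm h2 N ≤ c := by
  refine Real.sSup_le ?_ hc
  rintro r ⟨M, hM, rfl⟩
  exact hub M hM

lemma genNorm_zero : genNorm h2 (0 : Fin 2 → Fin 2 → ℝ) = 0 :=
  le_antisymm (genNorm_le le_rfl _ fun M _ => by simp [frob]) (genNorm_nonneg 0)

/-- the calibration matrix: rows are `e2` and `e3`. -/
def M0 : Fin 2 → Fin 2 → ℝ := fun i j => (![e2, e3] i) j

lemma sqrt3_sq : Real.sqrt 3 * Real.sqrt 3 = 3 := Real.mul_self_sqrt (by norm_num)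

lemma norm_e1 : ‖e1‖ = 1 := by
  rw [EuclideanSpace.norm_eq]
  simp [e1, pt, Fin.sum_univ_two]

lemma norm_e2 : ‖e2‖ = 1 := by
  rw [EuclideanSpace.norm_eq]
  rw [Fin.sum_univ_two]
  have : (‖e2 0‖ ^ 2 + ‖e2 1‖ ^ 2 : ℝ) = 1 := by
    simp only [e2, pt, Real.norm_eq_abs, sq_abs]
    norm_num [Matrix.cons_val_zero, Matrix.cons_val_one]
    nlinarith [sqrt3_sq]
  rw [this, Real.sqrt_one]

lemma norm_e3 : ‖e3‖ = 1 := by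
  rw [EuclideanSpace.norm_eq]
  rw [Fin.sum_univ_two]
  have : (‖e3 0‖ ^ 2 + ‖e3 1‖ ^ 2 : ℝ) = 1 := by
    simp only [e3, pt, Real.norm_eq_abs, sq_abs]
    norm_num [Matrix.cons_val_zero, Matrix.cons_val_one]
    nlinarith [sqrt3_sq]
  rw [this, Real.sqrt_one]

lemma matVec_eq_inner (M : Fin 2 → Fin 2 → ℝ) (rows : Fin 2 → Euc 2)
    (hrows : ∀ i j, M i j = rows i j) (u : Euc 2) (i : Fin 2) :
    matVec M u i = inner ℝ (rows i) u := by
  rw [PiLp.inner_apply, matVec]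
  refine Finset.sum_congr rfl fun j _ => ?_
  simp [hrows i j, RCLike.inner_apply, mul_comm]

lemma M0_adm : inSubdiffH h2 M0 := by
  intro u hu
  refine le_trans (dualNorm_le _) ?_
  have hv2 : matVec M0 u 0 = inner ℝ e2 u :=
    matVec_eq_inner M0 ![e2, e3] (fun i j => rfl) u 0
  have hv3 : matVec M0 u 1 = inner ℝ e3 u :=
    matVec_eq_inner M0 ![e2, e3] (fun i j => rfl) u 1
  have key : ∀ (v : Euc 2), ‖v‖ = 1 → |(inner ℝ v u : ℝ)| ≤ 1 := fun v hv =>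
    le_trans (abs_real_inner_le_norm v u) (by rw [hv, one_mul]; exact hu)
  have h23 : (inner ℝ e2 u : ℝ) + inner ℝ e3 u = inner ℝ e1 u := by
    rw [← inner_add_left]
    congr 1
    ext j
    fin_cases j <;> simp [e1, e2, e3, pt] <;> ring
  rw [hv2, hv3]
  refine max_le (max_le ?_ ?_) ?_
  · exact key e2 norm_e2
  · exact key e3 norm_e3
  · rw [h23]; exact key e1 norm_e1

end S14
namespace S14

/-! ### Section 3: integration against signed measures -/

variable {d : ℕ}

lemma jordan_apply (ν : SignedMeasure (Euc d)) {B : Set (Euc d)} (hB : MeasurableSet B) :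
    ν B = (ν.toJordanDecomposition.posPart B).toReal
      - (ν.toJordanDecomposition.negPart B).toReal := by
  conv_lhs => rw [← ν.toSignedMeasure_toJordanDecomposition]
  rw [JordanDecomposition.toSignedMeasure, VectorMeasure.sub_apply,
    Measure.toSignedMeasure_apply_measurable hB, Measure.toSignedMeasure_apply_measurable hB]
  rfl

lemma exists_jordan_sets (ν : SignedMeasure (Euc d)) :
    ∃ i : Set (Euc d), MeasurableSet i ∧
      (∀ B : Set (Euc d), MeasurableSet B →
        ν.toJordanDecomposition.posPart B = ENNReal.ofReal (ν (i ∩ B)) ∧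
        ν.toJordanDecomposition.negPart B = ENNReal.ofReal (-ν (iᶜ ∩ B))) := by
  obtain ⟨i, hi₁, hi₂, hi₃, hpos, hneg⟩ := ν.toJordanDecomposition_spec
  refine ⟨i, hi₁, fun B hB => ⟨?_, ?_⟩⟩
  · rw [hpos, SignedMeasure.toMeasureOfZeroLE_apply ν hi₂ hi₁ hB]
    have hnn : 0 ≤ ν (i ∩ B) := VectorMeasure.nonneg_of_zero_le_restrict ν
      (VectorMeasure.zero_le_restrict_subset ν hi₁ Set.inter_subset_left hi₂)
    simp [ENNReal.ofReal, Real.toNNReal, max_eq_left hnn]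
  · rw [hneg, SignedMeasure.toMeasureOfLEZero_apply ν hi₃ hi₁.compl hB]
    have := VectorMeasure.zero_le_restrict_subset (-ν) hi₁.compl
      (Set.inter_subset_left (t := B))
    have hnn : 0 ≤ -ν (iᶜ ∩ B) := by
      rw [← VectorMeasure.neg_apply]
      exact VectorMeasure.nonneg_of_zero_le_restrict (-ν)
        (this (@neg_zero (VectorMeasure (Euc d) ℝ) _ ▸ VectorMeasure.neg_le_neg _ _ hi₁.compl hi₃))
    simp [ENNReal.ofReal, Real.toNNReal, max_eq_left hnn]

lemma sInt_eq (ν : SignedMeasure (Euc d)) (μ1 μ2 : Measure (Euc d))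
    [IsFiniteMeasure μ1] [IsFiniteMeasure μ2]
    (hν : ∀ B : Set (Euc d), MeasurableSet B → ν B = (μ1 B).toReal - (μ2 B).toReal)
    (f : Euc d → ℝ) (hf1 : Integrable f μ1) (hf2 : Integrable f μ2) :
    sInt ν f = ∫ x, f x ∂μ1 - ∫ x, f x ∂μ2 := by
  set p := ν.toJordanDecomposition.posPart with hp
  set q := ν.toJordanDecomposition.negPart with hq
  have key : p + μ2 = q + μ1 := by
    refine Measure.ext fun B hB => ?_
    have h1 := hν B hB
    have h2 := jordan_apply ν hB
    have e1 : p B ≠ ⊤ := measure_ne_top _ _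
    have e2 : q B ≠ ⊤ := measure_ne_top _ _
    have e3 : μ1 B ≠ ⊤ := measure_ne_top _ _
    have e4 : μ2 B ≠ ⊤ := measure_ne_top _ _
    have h3 : (p B).toReal + (μ2 B).toReal = (q B).toReal + (μ1 B).toReal := by
      rw [← hp, ← hq] at h2; linarith
    have h4 := congrArg ENNReal.ofReal h3
    rw [ENNReal.ofReal_add ENNReal.toReal_nonneg ENNReal.toReal_nonneg,
      ENNReal.ofReal_add ENNReal.toReal_nonneg ENNReal.toReal_nonneg,
      ENNReal.ofReal_toReal e1, ENNReal.ofReal_toReal e2, ENNReal.ofReal_toReal e3,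
      ENNReal.ofReal_toReal e4] at h4
    simpa [Measure.add_apply] using h4
  obtain ⟨i, hi, hspec⟩ := exists_jordan_sets ν
  have hple : p ≤ μ1 := by
    refine Measure.le_iff.mpr fun B hB => ?_
    have hBi : MeasurableSet (B ∩ i) := hB.inter hi
    have hpB : p B = p (B ∩ i) := by
      rw [(hspec B hB).1, (hspec _ hBi).1]
      congr 1
      rw [Set.inter_comm B i, ← Set.inter_assoc, Set.inter_self]
    have hqBi : q (B ∩ i) = 0 := by
      rw [(hspec _ hBi).2]
      have : iᶜ ∩ (B ∩ i) = ∅ := by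
        ext x; simp only [Set.mem_inter_iff, Set.mem_compl_iff, Set.mem_empty_iff_false]
        tauto
      simp [this]
    have := congrFun (congrArg (fun μ : Measure (Euc d) => fun s => μ s) key) (B ∩ i)
    simp only [Measure.add_apply, hqBi, zero_add] at this
    calc p B = p (B ∩ i) := hpB
      _ ≤ p (B ∩ i) + μ2 (B ∩ i) := le_self_add
      _ = μ1 (B ∩ i) := this
      _ ≤ μ1 B := measure_mono Set.inter_subset_left
  have hqle : q ≤ μ2 := by
    refine Measure.le_iff.mpr fun B hB => ?_
    have hBi : MeasurableSet (B ∩ iᶜ) := hB.inter hi.compl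
    have hqB : q B = q (B ∩ iᶜ) := by
      rw [(hspec B hB).2, (hspec _ hBi).2]
      congr 2
      rw [Set.inter_comm B iᶜ, ← Set.inter_assoc, Set.inter_self]
    have hpBi : p (B ∩ iᶜ) = 0 := by
      rw [(hspec _ hBi).1]
      have : i ∩ (B ∩ iᶜ) = ∅ := by
        ext x; simp only [Set.mem_inter_iff, Set.mem_compl_iff, Set.mem_empty_iff_false]
        tauto
      simp [this]
    have := congrFun (congrArg (fun μ : Measure (Euc d) => fun s => μ s) key) (B ∩ iᶜ)
    simp only [Measure.add_apply, hpBi, zero_add] at this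
    calc q B = q (B ∩ iᶜ) := hqB
      _ ≤ q (B ∩ iᶜ) + μ1 (B ∩ iᶜ) := le_self_add
      _ = μ2 (B ∩ iᶜ) := by rw [← this]
      _ ≤ μ2 B := measure_mono Set.inter_subset_left
  have hfp : Integrable f p := hf1.mono_measure hple
  have hfq : Integrable f q := hf2.mono_measure hqle
  have hint : ∫ x, f x ∂(p + μ2) = ∫ x, f x ∂(q + μ1) := by rw [key]
  rw [integral_add_measure hfp hf2, integral_add_measure hfq hf1] at hint
  rw [sInt]
  rw [← hp, ← hq]
  linarith

lemma sInt_measure (ν : SignedMeasure (Euc d)) (μ : Measure (Euc d)) [IsFiniteMeasure μ]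
    (hν : ∀ B : Set (Euc d), MeasurableSet B → ν B = (μ B).toReal)
    (f : Euc d → ℝ) (hf : Integrable f μ) : sInt ν f = ∫ x, f x ∂μ := by
  have := sInt_eq ν μ 0 (fun B hB => by simp [hν B hB]) f hf (integrable_zero_measure)
  simpa using this

end S14
namespace S14

/-! ### Section 4: linear combinations -/

variable {d : ℕ}

lemma isFiniteMeasure_sum {k : ℕ} (μ : Fin k → Measure (Euc d))
    [∀ s, IsFiniteMeasure (μ s)] (a : Fin k → ℝ≥0∞) (ha : ∀ s, a s ≠ ⊤) :
    IsFiniteMeasure (∑ s, a s • μ s) := by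
  constructor
  rw [Measure.finset_sum_apply]
  refine ENNReal.sum_lt_top.mpr fun s _ => ?_
  rw [Measure.smul_apply, smul_eq_mul]
  exact ENNReal.mul_lt_top (lt_top_iff_ne_top.mpr (ha s)) (measure_lt_top _ _)

lemma sum_smul_apply {k : ℕ} (μ : Fin k → Measure (Euc d))
    [∀ s, IsFiniteMeasure (μ s)] (a : Fin k → ℝ) (ha : ∀ s, 0 ≤ a s)
    (B : Set (Euc d)) :
    ((∑ s, ENNReal.ofReal (a s) • μ s) B).toReal = ∑ s, a s * (μ s B).toReal := by
  rw [Measure.finset_sum_apply]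
  rw [ENNReal.toReal_sum (fun s _ => ?_)]
  · refine Finset.sum_congr rfl fun s _ => ?_
    rw [Measure.smul_apply, smul_eq_mul, ENNReal.toReal_mul, ENNReal.toReal_ofReal (ha s)]
  · rw [Measure.smul_apply, smul_eq_mul]
    exact (ENNReal.mul_lt_top ENNReal.ofReal_lt_top (measure_lt_top _ _)).ne

lemma sInt_combo {k : ℕ} (μ : Fin k → Measure (Euc d)) [∀ s, IsFiniteMeasure (μ s)]
    (c : Fin k → ℝ) (ν : SignedMeasure (Euc d))
    (hν : ∀ B : Set (Euc d), MeasurableSet B → ν B = ∑ s, c s * (μ s B).toReal)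
    (f : Euc d → ℝ) (hf : ∀ s, Integrable f (μ s)) :
    sInt ν f = ∑ s, c s * ∫ x, f x ∂μ s := by
  set ap : Fin k → ℝ := fun s => max (c s) 0 with hap
  set am : Fin k → ℝ := fun s => max (-c s) 0 with ham
  have hap0 : ∀ s, 0 ≤ ap s := fun s => le_max_right _ _
  have ham0 : ∀ s, 0 ≤ am s := fun s => le_max_right _ _
  set μ1 : Measure (Euc d) := ∑ s, ENNReal.ofReal (ap s) • μ s with hμ1
  set μ2 : Measure (Euc d) := ∑ s, ENNReal.ofReal (am s) • μ s with hμ2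
  haveI i1 : IsFiniteMeasure μ1 := isFiniteMeasure_sum μ _ (fun s => ENNReal.ofReal_ne_top)
  haveI i2 : IsFiniteMeasure μ2 := isFiniteMeasure_sum μ _ (fun s => ENNReal.ofReal_ne_top)
  have hdiff : ∀ B : Set (Euc d), MeasurableSet B →
      ν B = (μ1 B).toReal - (μ2 B).toReal := by
    intro B hB
    rw [hν B hB, hμ1, hμ2, sum_smul_apply μ ap hap0 B, sum_smul_apply μ am ham0 B,
      ← Finset.sum_sub_distrib]
    refine Finset.sum_congr rfl fun s _ => ?_
    have : ap s - am s = c s := by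
      simp only [hap, ham]
      rcases le_total (c s) 0 with h | h
      · rw [sup_eq_right.mpr h, sup_eq_left.mpr (neg_nonneg.mpr h)]; ring
      · rw [sup_eq_left.mpr h, sup_eq_right.mpr (neg_nonpos.mpr h)]; ring
    rw [← this]; ring
  have hint1 : ∀ s, Integrable f (ENNReal.ofReal (ap s) • μ s) :=
    fun s => (hf s).smul_measure ENNReal.ofReal_ne_top
  have hint2 : ∀ s, Integrable f (ENNReal.ofReal (am s) • μ s) :=
    fun s => (hf s).smul_measure ENNReal.ofReal_ne_top
  have hI1 : Integrable f μ1 := by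
    rw [hμ1]; exact integrable_finset_sum_measure.mpr fun s _ => hint1 s
  have hI2 : Integrable f μ2 := by
    rw [hμ2]; exact integrable_finset_sum_measure.mpr fun s _ => hint2 s
  rw [sInt_eq ν μ1 μ2 hdiff f hI1 hI2, hμ1, hμ2,
    integral_finset_sum_measure (fun s _ => hint1 s),
    integral_finset_sum_measure (fun s _ => hint2 s), ← Finset.sum_sub_distrib]
  refine Finset.sum_congr rfl fun s _ => ?_
  rw [integral_smul_measure, integral_smul_measure, ENNReal.toReal_ofReal (hap0 s),
    ENNReal.toReal_ofReal (ham0 s), smul_eq_mul, smul_eq_mul]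
  have : ap s - am s = c s := by
    simp only [hap, ham]
    rcases le_total (c s) 0 with h | h
    · rw [sup_eq_right.mpr h, sup_eq_left.mpr (neg_nonneg.mpr h)]; ring
    · rw [sup_eq_left.mpr h, sup_eq_right.mpr (neg_nonpos.mpr h)]; ring
  rw [← this]; ring

lemma jordan_null (ν : SignedMeasure (Euc d)) {A : Set (Euc d)} (hA : MeasurableSet A)
    (h0 : ∀ C : Set (Euc d), MeasurableSet C → C ⊆ A → ν C = 0) :
    ν.toJordanDecomposition.posPart A = 0 ∧ ν.toJordanDecomposition.negPart A = 0 := by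
  obtain ⟨i, hi, hspec⟩ := exists_jordan_sets ν
  obtain ⟨h1, h2⟩ := hspec A hA
  constructor
  · rw [h1, h0 _ (hi.inter hA) Set.inter_subset_right]; simp
  · rw [h2, h0 _ (hi.compl.inter hA) Set.inter_subset_right]; simp

end S14
namespace S14

/-! ### Section 5: Hausdorff measure on segments, and integration by parts -/

lemma line_isometry (a eu : Euc 2) (he : ‖eu‖ = 1) :
    Isometry (fun t : ℝ => a + t • eu) := by
  refine Isometry.of_dist_eq fun t s => ?_
  rw [dist_eq_norm, dist_eq_norm]
  have : a + t • eu - (a + s • eu) = (t - s) • eu := by module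
  rw [this, norm_smul, he, mul_one, Real.norm_eq_abs]

lemma seg_param (a eu : Euc 2) {L : ℝ} (hL : 0 < L) :
    segment ℝ a (a + L • eu) = (fun t : ℝ => a + t • eu) '' Set.Icc 0 L := by
  rw [segment_eq_image']
  ext z
  simp only [Set.mem_image]
  constructor
  · rintro ⟨t, ht, rfl⟩
    refine ⟨t * L, ⟨mul_nonneg ht.1 hL.le, ?_⟩, ?_⟩
    · calc t * L ≤ 1 * L := mul_le_mul_of_nonneg_right ht.2 hL.le
        _ = L := one_mul L
    · rw [add_sub_cancel_left, smul_smul]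
  · rintro ⟨t, ht, rfl⟩
    refine ⟨t / L, ⟨div_nonneg ht.1 hL.le, div_le_one_of_le₀ ht.2 hL.le⟩, ?_⟩
    rw [add_sub_cancel_left, smul_smul, div_mul_cancel₀ _ hL.ne']

lemma restrict_image_eq_map (a eu : Euc 2) (he : ‖eu‖ = 1) {s : Set ℝ}
    (hs : MeasurableSet s) :
    (μH[1] : Measure (Euc 2)).restrict ((fun t : ℝ => a + t • eu) '' s)
      = Measure.map (fun t : ℝ => a + t • eu) (volume.restrict s) := by
  set γ : ℝ → Euc 2 := fun t => a + t • eu with hγ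
  have hiso : Isometry γ := line_isometry a eu he
  have hemb : MeasurableEmbedding γ := hiso.isClosedEmbedding.measurableEmbedding
  refine Measure.ext fun B hB => ?_
  rw [Measure.restrict_apply hB, hemb.map_apply,
    Measure.restrict_apply (hemb.measurable hB)]
  have him : γ '' (γ ⁻¹' B ∩ s) = B ∩ γ '' s := by
    rw [Set.image_inter hemb.injective, Set.image_preimage_eq_inter_range]
    rw [Set.inter_assoc]
    congr 1
    rw [Set.inter_eq_right.mpr (Set.image_subset_range γ s)]
  calc μH[1] (B ∩ γ '' s) = μH[1] (γ '' (γ ⁻¹' B ∩ s)) := by rw [him]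
    _ = μH[1] (γ ⁻¹' B ∩ s) := hiso.hausdorffMeasure_image (Or.inl zero_le_one) _
    _ = volume (γ ⁻¹' B ∩ s) := by rw [hausdorffMeasure_real]

lemma seg_integral (a eu : Euc 2) (he : ‖eu‖ = 1) {L : ℝ} (hL : 0 < L)
    (g : Euc 2 → ℝ) (hg : ContDiff ℝ (⊤ : ℕ∞) g) :
    ∫ x, fderiv ℝ g x eu ∂((μH[1] : Measure (Euc 2)).restrict (segment ℝ a (a + L • eu)))
      = g (a + L • eu) - g a := by
  set γ : ℝ → Euc 2 := fun t => a + t • eu with hγ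
  have hiso : Isometry γ := line_isometry a eu he
  have hemb : MeasurableEmbedding γ := hiso.isClosedEmbedding.measurableEmbedding
  rw [seg_param a eu hL, restrict_image_eq_map a eu he measurableSet_Icc,
    hemb.integral_map]
  have hγd : ∀ t : ℝ, HasDerivAt γ eu t := by
    intro t
    have h1 : HasDerivAt (fun t : ℝ => t • eu) ((1 : ℝ) • eu) t :=
      (hasDerivAt_id t).smul_const eu
    rw [one_smul] at h1
    exact h1.const_add a
  have hone : (1 : ℕ∞) ≤ (⊤ : ℕ∞) := le_top
  have hder : ∀ t : ℝ, HasDerivAt (fun t => g (γ t)) (fderiv ℝ g (γ t) eu) t := fun t =>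
    ((hg.differentiable (by simp) (γ t)).hasFDerivAt).comp_hasDerivAt t (hγd t)
  have hcont : Continuous fun t : ℝ => fderiv ℝ g (γ t) eu :=
    ((hg.continuous_fderiv (by simp)).comp hiso.continuous).clm_apply continuous_const
  have key : ∫ t in (0:ℝ)..L, fderiv ℝ g (γ t) eu = g (γ L) - g (γ 0) :=
    intervalIntegral.integral_eq_sub_of_hasDerivAt (fun t _ => hder t)
      (hcont.intervalIntegrable 0 L)
  rw [intervalIntegral.integral_of_le hL.le] at key
  rw [← MeasureTheory.integral_Icc_eq_integral_Ioc] at key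
  have hval : g (γ L) - g (γ 0) = g (a + L • eu) - g a := by simp [hγ]
  rw [← hval]
  exact key

lemma seg_compact (a b : Euc 2) : IsCompact (segment ℝ a b) := by
  rw [segment_eq_image ℝ a b]
  exact isCompact_Icc.image (by fun_prop)

lemma seg_measurable (a b : Euc 2) : MeasurableSet (segment ℝ a b) :=
  (seg_compact a b).isClosed.measurableSet

lemma seg_hm_ne_top (a b : Euc 2) (B : Set (Euc 2)) : μH[1] (B ∩ segment ℝ a b) ≠ ⊤ := by
  refine ne_top_of_le_ne_top ?_ (measure_mono Set.inter_subset_right)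
  rw [hausdorffMeasure_segment]
  exact edist_ne_top a b

instance seg_restrict_finite (a b : Euc 2) :
    IsFiniteMeasure ((μH[1] : Measure (Euc 2)).restrict (segment ℝ a b)) := by
  constructor
  rw [Measure.restrict_apply_univ]
  rw [hausdorffMeasure_segment]
  exact edist_lt_top a b

lemma proj_sum_fderiv (ψ : Euc 2 → Fin 2 → ℝ) (hψ : ContDiff ℝ (⊤ : ℕ∞) ψ)
    (θv : Fin 2 → ℝ) (x : Euc 2) (v : Euc 2) :
    fderiv ℝ (fun y => ∑ i, θv i * ψ y i) x v = ∑ i, θv i * fderiv ℝ ψ x v i := by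
  set Lf : (Fin 2 → ℝ) →L[ℝ] ℝ :=
    ∑ i, θv i • ContinuousLinearMap.proj (R := ℝ) (φ := fun _ : Fin 2 => ℝ) i with hLf
  have hLf_apply : ∀ w : Fin 2 → ℝ, Lf w = ∑ i, θv i * w i := by
    intro w
    rw [hLf]
    rw [ContinuousLinearMap.sum_apply]
    refine Finset.sum_congr rfl fun i _ => ?_
    simp [ContinuousLinearMap.proj_apply]
  have hcomp : (fun y => ∑ i, θv i * ψ y i) = fun y => Lf (ψ y) := by
    funext y; rw [hLf_apply]
  rw [hcomp]
  have hψd : DifferentiableAt ℝ ψ x := hψ.differentiable (by simp) x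
  have := fderiv_comp (𝕜 := ℝ) x (Lf.differentiableAt) hψd
  rw [show (fun y => Lf (ψ y)) = Lf ∘ ψ from rfl, this, Lf.fderiv]
  rw [ContinuousLinearMap.coe_comp', Function.comp_apply, hLf_apply]

lemma euc_decomp (v : Euc 2) :
    v = v 0 • EuclideanSpace.single (0 : Fin 2) (1 : ℝ)
      + v 1 • EuclideanSpace.single (1 : Fin 2) (1 : ℝ) := by
  ext j
  fin_cases j <;>
    simp [EuclideanSpace.single_apply, PiLp.add_apply, PiLp.smul_apply, smul_eq_mul]

lemma fderiv_apply_eq_jac (ψ : Euc 2 → Fin 2 → ℝ) (x : Euc 2) (v : Euc 2) (i : Fin 2) :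
    fderiv ℝ ψ x v i = v 0 * jac ψ x i 0 + v 1 * jac ψ x i 1 := by
  conv_lhs => rw [euc_decomp v]
  rw [map_add, (fderiv ℝ ψ x).map_smul, (fderiv ℝ ψ x).map_smul]
  simp [jac, Pi.add_apply, Pi.smul_apply, smul_eq_mul]

end S14
namespace S14

/-! ### Section 6: the specific network geometry -/

/-- start points of the five segments -/
def segA : Fin 5 → Euc 2 := ![pp1, pp2, pm1, pp3, pm1]
/-- end points of the five segments -/
def segB : Fin 5 → Euc 2 := ![pm1, pp1, pm2, pp1, pm3]
/-- multiplicities -/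
def Θv : Fin 5 → Fin 2 → ℝ := ![θ1, θ2, θ2, θ3, θ3]
/-- directions -/
def Ev : Fin 5 → Euc 2 := ![e1, e2, e2, e3, e3]
/-- lengths -/
def Lv : Fin 5 → ℝ := ![2, 1, 1, 1, 1]
/-- the five segments -/
def SegSet (s : Fin 5) : Set (Euc 2) := segment ℝ (segA s) (segB s)

lemma coord_pp1 : pp1 0 = -1 ∧ pp1 1 = 0 := by
  constructor <;> simp [pp1, pm1, e1, pt]
lemma coord_pm1 : pm1 0 = 1 ∧ pm1 1 = 0 := by
  constructor <;> simp [pm1, e1, pt]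
lemma coord_pm2 : pm2 0 = 3/2 ∧ pm2 1 = Real.sqrt 3 / 2 := by
  constructor <;> (simp [pm2, e1, e2, pt, PiLp.add_apply]; try norm_num)
lemma coord_pp2 : pp2 0 = -(3/2) ∧ pp2 1 = -(Real.sqrt 3 / 2) := by
  have := coord_pm2
  constructor <;> simp [pp2, PiLp.neg_apply, this.1, this.2]
lemma coord_pm3 : pm3 0 = 3/2 ∧ pm3 1 = -(Real.sqrt 3) / 2 := by
  constructor <;> (simp [pm3, e1, e3, pt, PiLp.add_apply]; try norm_num)
lemma coord_pp3 : pp3 0 = -(3/2) ∧ pp3 1 = Real.sqrt 3 / 2 := by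
  have := coord_pm3
  constructor <;> (simp [pp3, PiLp.neg_apply, this.1, this.2]; try ring)

lemma dir_eq : ∀ s : Fin 5, segB s = segA s + Lv s • Ev s := by
  intro s
  fin_cases s <;>
  · ext j
    fin_cases j <;>
      simp [segA, segB, Lv, Ev, pm1, pm2, pm3, pp1, pp2, pp3, e1, e2, e3, pt,
        PiLp.add_apply, PiLp.neg_apply, PiLp.smul_apply, smul_eq_mul] <;> ring

lemma norm_Ev : ∀ s : Fin 5, ‖Ev s‖ = 1 := by
  intro s
  fin_cases s <;> simp [Ev] <;> first
    | exact norm_e1 | exact norm_e2 | exact norm_e3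

lemma Lv_pos : ∀ s : Fin 5, 0 < Lv s := by
  intro s; fin_cases s <;> norm_num [Lv]

lemma seg_coord {u v z : Euc 2} (hz : z ∈ segment ℝ u v) (j : Fin 2) :
    min (u j) (v j) ≤ z j ∧ z j ≤ max (u j) (v j) := by
  obtain ⟨a, b, ha, hb, hab, rfl⟩ := hz
  have hz : (a • u + b • v) j = a * u j + b * v j := by
    simp [PiLp.add_apply, PiLp.smul_apply, smul_eq_mul]
  rw [hz]
  have hu : a * u j + b * u j = u j := by rw [← add_mul, hab, one_mul]
  have hv : a * v j + b * v j = v j := by rw [← add_mul, hab, one_mul]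
  constructor
  · rcases le_total (u j) (v j) with h | h
    · refine le_trans (min_le_left _ _) ?_
      have := mul_le_mul_of_nonneg_left h hb; linarith
    · refine le_trans (min_le_right _ _) ?_
      have := mul_le_mul_of_nonneg_left h ha; linarith
  · rcases le_total (u j) (v j) with h | h
    · refine le_trans ?_ (le_max_right _ _)
      have := mul_le_mul_of_nonneg_left h ha; linarith
    · refine le_trans ?_ (le_max_left _ _)
      have := mul_le_mul_of_nonneg_left h hb; linarith

lemma disj2 : Disjoint (segment ℝ pp2 pp1) (segment ℝ pm1 pm2) := by
  rw [Set.disjoint_left]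
  intro z h1 h2
  have b1 := (seg_coord h1 0).2
  have b2 := (seg_coord h2 0).1
  rw [coord_pp2.1, coord_pp1.1] at b1
  rw [coord_pm1.1, coord_pm2.1] at b2
  rw [max_eq_right (by norm_num), min_eq_left (by norm_num)] at *
  linarith

lemma disj3 : Disjoint (segment ℝ pp3 pp1) (segment ℝ pm1 pm3) := by
  rw [Set.disjoint_left]
  intro z h1 h2
  have b1 := (seg_coord h1 0).2
  have b2 := (seg_coord h2 0).1
  rw [coord_pp3.1, coord_pp1.1] at b1
  rw [coord_pm1.1, coord_pm3.1] at b2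
  rw [max_eq_right (by norm_num), min_eq_left (by norm_num)] at *
  linarith

/-- the representation of `F` as a linear combination of restricted Hausdorff measures. -/
lemma F_repr (F : MatMeas 2 2)
    (hF : ∀ B : Set (Euc 2), MeasurableSet B → ∀ i j,
      F i j B = segMass (segment ℝ pp1 pm1) θ1 e1 B i j
        + segMass (segment ℝ pp2 pp1 ∪ segment ℝ pm1 pm2) θ2 e2 B i j
        + segMass (segment ℝ pp3 pp1 ∪ segment ℝ pm1 pm3) θ3 e3 B i j)
    {B : Set (Euc 2)} (hB : MeasurableSet B) (i j : Fin 2) :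
    F i j B = ∑ s : Fin 5,
      (Θv s i * Ev s j) * (((μH[1] : Measure (Euc 2)).restrict (SegSet s)) B).toReal := by
  rw [hF B hB]
  have split : ∀ u1 v1 u2 v2 : Euc 2, Disjoint (segment ℝ u1 v1) (segment ℝ u2 v2) →
      (μH[1] (B ∩ (segment ℝ u1 v1 ∪ segment ℝ u2 v2))).toReal
        = (μH[1] (B ∩ segment ℝ u1 v1)).toReal + (μH[1] (B ∩ segment ℝ u2 v2)).toReal := by
    intro u1 v1 u2 v2 hd
    rw [Set.inter_union_distrib_left]
    rw [measure_union (hd.mono Set.inter_subset_right Set.inter_subset_right)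
      (hB.inter (seg_measurable u2 v2))]
    exact ENNReal.toReal_add (seg_hm_ne_top _ _ _) (seg_hm_ne_top _ _ _)
  simp only [segMass]
  rw [split _ _ _ _ disj2, split _ _ _ _ disj3]
  have hres : ∀ u v : Euc 2,
      (((μH[1] : Measure (Euc 2)).restrict (segment ℝ u v)) B).toReal
        = (μH[1] (B ∩ segment ℝ u v)).toReal := by
    intro u v; rw [Measure.restrict_apply hB]
  rw [Fin.sum_univ_five]
  simp only [SegSet, segA, segB, Θv, Ev]
  simp only [Matrix.cons_val_zero, Matrix.cons_val_one, Matrix.head_cons,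
    Matrix.cons_val_two, Matrix.tail_cons, Matrix.cons_val_three, Matrix.cons_val_four]
  rw [hres, hres, hres, hres, hres]
  ring

end S14
namespace S14

/-! ### Section 7: the boundary identity -/

def Qv : Fin 4 → Euc 2 := ![pm2, pp2, pm3, pp3]

lemma integrable_of_cpt {f : Euc 2 → ℝ} (hf : Continuous f) (hcs : HasCompactSupport f)
    (μ : Measure (Euc 2)) [IsFiniteMeasure μ] : Integrable f μ :=
  hf.integrable_of_hasCompactSupport hcs

lemma F0_repr (F0 : VecMeas 2 2)
    (hF0 : ∀ B : Set (Euc 2), MeasurableSet B → ∀ i,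
      F0 i B = θ2 i * (dirac01 pm2 B - dirac01 pp2 B)
        + θ3 i * (dirac01 pm3 B - dirac01 pp3 B))
    {B : Set (Euc 2)} (hB : MeasurableSet B) (i : Fin 2) :
    F0 i B = ∑ s : Fin 4, (![θ2 i, -θ2 i, θ3 i, -θ3 i] s)
      * ((Measure.dirac (Qv s)) B).toReal := by
  rw [hF0 B hB]
  have hd : ∀ p : Euc 2, ((Measure.dirac p) B).toReal = dirac01 p B := by
    intro p
    rw [Measure.dirac_apply' p hB]
    by_cases hp : p ∈ B
    · simp [Set.indicator_of_mem hp, dirac01]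
    · simp [Set.indicator_of_notMem hp, dirac01]
  rw [Fin.sum_univ_four]
  simp only [Matrix.cons_val_zero, Matrix.cons_val_one, Matrix.head_cons,
    Matrix.cons_val_two, Matrix.tail_cons, Matrix.cons_val_three]
  rw [hd, hd, hd, hd]
  simp only [Qv, Matrix.cons_val_zero, Matrix.cons_val_one, Matrix.head_cons,
    Matrix.cons_val_two, Matrix.tail_cons, Matrix.cons_val_three]
  ring

lemma sInt_F0 (F0 : VecMeas 2 2)
    (hF0 : ∀ B : Set (Euc 2), MeasurableSet B → ∀ i,
      F0 i B = θ2 i * (dirac01 pm2 B - dirac01 pp2 B)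
        + θ3 i * (dirac01 pm3 B - dirac01 pp3 B))
    (i : Fin 2) (f : Euc 2 → ℝ) (hf : Continuous f) (hcs : HasCompactSupport f) :
    sInt (F0 i) f = θ2 i * (f pm2 - f pp2) + θ3 i * (f pm3 - f pp3) := by
  have := sInt_combo (fun s : Fin 4 => Measure.dirac (Qv s))
    (![θ2 i, -θ2 i, θ3 i, -θ3 i]) (F0 i)
    (fun B hB => F0_repr F0 hF0 hB i) f
    (fun s => integrable_of_cpt hf hcs _)
  rw [this, Fin.sum_univ_four]
  simp only [Matrix.cons_val_zero, Matrix.cons_val_one, Matrix.head_cons,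
    Matrix.cons_val_two, Matrix.tail_cons, Matrix.cons_val_three]
  rw [integral_dirac, integral_dirac, integral_dirac, integral_dirac]
  simp only [Qv, Matrix.cons_val_zero, Matrix.cons_val_one, Matrix.head_cons,
    Matrix.cons_val_two, Matrix.tail_cons, Matrix.cons_val_three]
  ring

lemma jac_continuous (ψ : Euc 2 → Fin 2 → ℝ) (hψ : ContDiff ℝ (⊤ : ℕ∞) ψ) (i j : Fin 2) :
    Continuous fun x => jac ψ x i j := by
  have h1 : Continuous fun x => fderiv ℝ ψ x :=
    hψ.continuous_fderiv (by simp)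
  exact (continuous_apply i).comp (h1.clm_apply continuous_const)

lemma jac_cpt (ψ : Euc 2 → Fin 2 → ℝ) (hcs : HasCompactSupport ψ) (i j : Fin 2) :
    HasCompactSupport fun x => jac ψ x i j := by
  have h1 : HasCompactSupport fun x => fderiv ℝ ψ x := hcs.fderiv ℝ
  exact h1.comp_left (g := fun D : Euc 2 →L[ℝ] (Fin 2 → ℝ) => D (EuclideanSpace.single j 1) i)
    (by simp)

end S14
namespace S14

lemma psi_comp_continuous (ψ : Euc 2 → Fin 2 → ℝ) (hψ : ContDiff ℝ (⊤ : ℕ∞) ψ) (i : Fin 2) :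
    Continuous fun x => ψ x i :=
  (continuous_apply i).comp hψ.continuous

lemma psi_comp_cpt (ψ : Euc 2 → Fin 2 → ℝ) (hψc : HasCompactSupport ψ) (i : Fin 2) :
    HasCompactSupport fun x => ψ x i :=
  hψc.comp_left (g := fun v : Fin 2 → ℝ => v i) rfl

lemma boundary_F (F : MatMeas 2 2)
    (hF : ∀ B : Set (Euc 2), MeasurableSet B → ∀ i j,
      F i j B = segMass (segment ℝ pp1 pm1) θ1 e1 B i j
        + segMass (segment ℝ pp2 pp1 ∪ segment ℝ pm1 pm2) θ2 e2 B i j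
        + segMass (segment ℝ pp3 pp1 ∪ segment ℝ pm1 pm3) θ3 e3 B i j)
    (F0 : VecMeas 2 2)
    (hF0 : ∀ B : Set (Euc 2), MeasurableSet B → ∀ i,
      F0 i B = θ2 i * (dirac01 pm2 B - dirac01 pp2 B)
        + θ3 i * (dirac01 pm3 B - dirac01 pp3 B)) :
    isBoundary F F0 := by
  intro ψ hψ hψc
  set μs : Fin 5 → Measure (Euc 2) :=
    fun s => (μH[1] : Measure (Euc 2)).restrict (SegSet s) with hμs
  haveI : ∀ s : Fin 5, IsFiniteMeasure (μs s) := fun s => seg_restrict_finite _ _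
  have hjc : ∀ i j : Fin 2, Continuous fun x => jac ψ x i j := jac_continuous ψ hψ
  have hjcs : ∀ i j : Fin 2, HasCompactSupport fun x => jac ψ x i j := jac_cpt ψ hψc
  have hint : ∀ (i j : Fin 2) (s : Fin 5), Integrable (fun x => jac ψ x i j) (μs s) :=
    fun i j s => integrable_of_cpt (hjc i j) (hjcs i j) _
  have hFij : ∀ i j : Fin 2, sInt (F i j) (fun x => jac ψ x i j)
      = ∑ s : Fin 5, (Θv s i * Ev s j) * ∫ x, jac ψ x i j ∂(μs s) := fun i j =>
    sInt_combo μs _ (F i j) (fun B hB => F_repr F hF hB i j) _ (fun s => hint i j s)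
  have per_seg : ∀ s : Fin 5,
      (∑ i, ∑ j, (Θv s i * Ev s j) * ∫ x, jac ψ x i j ∂(μs s))
        = ∑ i, Θv s i * (ψ (segB s) i - ψ (segA s) i) := by
    intro s
    set g : Euc 2 → ℝ := fun y => ∑ i, Θv s i * ψ y i with hg
    have hgc : ContDiff ℝ (⊤ : ℕ∞) g := by
      refine ContDiff.sum fun i _ => ContDiff.mul contDiff_const ?_
      exact (contDiff_pi.mp hψ i)
    have step1 : (∑ i, ∑ j, (Θv s i * Ev s j) * ∫ x, jac ψ x i j ∂(μs s))
        = ∫ x, ∑ i, ∑ j, (Θv s i * Ev s j) * jac ψ x i j ∂(μs s) := by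
      rw [integral_finset_sum _ (fun i _ =>
        integrable_finset_sum _ (fun j _ => (hint i j s).const_mul _))]
      refine Finset.sum_congr rfl fun i _ => ?_
      rw [integral_finset_sum _ (fun j _ => (hint i j s).const_mul _)]
      exact Finset.sum_congr rfl fun j _ => (integral_const_mul _ _).symm
    have step2 : (fun x => ∑ i, ∑ j, (Θv s i * Ev s j) * jac ψ x i j)
        = fun x => fderiv ℝ g x (Ev s) := by
      funext x
      rw [proj_sum_fderiv ψ hψ (Θv s) x (Ev s)]
      refine Finset.sum_congr rfl fun i _ => ?_
      rw [Fin.sum_univ_two, fderiv_apply_eq_jac ψ x (Ev s) i]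
      ring
    have hseg : SegSet s = segment ℝ (segA s) (segA s + Lv s • Ev s) := by
      rw [SegSet, ← dir_eq s]
    have step3 : ∫ x, fderiv ℝ g x (Ev s) ∂(μs s) = g (segB s) - g (segA s) := by
      rw [hμs]
      simp only []
      rw [hseg, seg_integral (segA s) (Ev s) (norm_Ev s) (Lv_pos s) g hgc, ← dir_eq s]
    rw [step1, step2, step3, hg]
    simp only []
    rw [← Finset.sum_sub_distrib]
    exact Finset.sum_congr rfl fun i _ => by ring
  have LHS : (∑ i, ∑ j, sInt (F i j) fun x => jac ψ x i j)
      = ∑ s : Fin 5, ∑ i, Θv s i * (ψ (segB s) i - ψ (segA s) i) := by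
    calc (∑ i, ∑ j, sInt (F i j) fun x => jac ψ x i j)
        = ∑ i, ∑ j, ∑ s : Fin 5, (Θv s i * Ev s j) * ∫ x, jac ψ x i j ∂(μs s) := by
          exact Finset.sum_congr rfl fun i _ => Finset.sum_congr rfl fun j _ => hFij i j
      _ = ∑ i, ∑ s : Fin 5, ∑ j, (Θv s i * Ev s j) * ∫ x, jac ψ x i j ∂(μs s) :=
          Finset.sum_congr rfl fun i _ => Finset.sum_comm
      _ = ∑ s : Fin 5, ∑ i, ∑ j, (Θv s i * Ev s j) * ∫ x, jac ψ x i j ∂(μs s) :=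
          Finset.sum_comm
      _ = ∑ s : Fin 5, ∑ i, Θv s i * (ψ (segB s) i - ψ (segA s) i) :=
          Finset.sum_congr rfl fun s _ => per_seg s
  have RHS : (∑ i, sInt (F0 i) fun x => ψ x i)
      = ∑ i, (θ2 i * (ψ pm2 i - ψ pp2 i) + θ3 i * (ψ pm3 i - ψ pp3 i)) :=
    Finset.sum_congr rfl fun i _ =>
      sInt_F0 F0 hF0 i _ (psi_comp_continuous ψ hψ i) (psi_comp_cpt ψ hψc i)
  rw [LHS, RHS]
  rw [Fin.sum_univ_five, Fin.sum_univ_two, Fin.sum_univ_two, Fin.sum_univ_two,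
    Fin.sum_univ_two, Fin.sum_univ_two, Fin.sum_univ_two]
  simp only [Θv, segA, segB, θ1, θ2, θ3, Matrix.cons_val_zero, Matrix.cons_val_one,
    Matrix.head_cons, Matrix.cons_val_two, Matrix.tail_cons, Matrix.cons_val_three,
    Matrix.cons_val_four]
  ring

end S14
namespace S14

/-! ### Section 9: bounds on `tvH` -/

lemma dist_vals : ∀ s : Fin 5, dist (segA s) (segB s) = Lv s := by
  have d0 : dist pp1 pm1 = 2 := by
    rw [dist_eq_norm, show pp1 - pm1 = (-2 : ℝ) • e1 from by
      ext j; fin_cases j <;>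
        simp [pp1, pm1, e1, pt, PiLp.sub_apply, PiLp.smul_apply, PiLp.neg_apply,
          smul_eq_mul] <;> ring]
    rw [norm_smul, norm_e1]
    norm_num
  have dA : dist pp2 pp1 = 1 := by
    rw [dist_eq_norm, show pp2 - pp1 = (-1 : ℝ) • e2 from by
      ext j; fin_cases j <;>
        simp [pp1, pp2, pm1, pm2, e1, e2, pt, PiLp.sub_apply, PiLp.smul_apply,
          PiLp.neg_apply, PiLp.add_apply, smul_eq_mul] <;> ring]
    rw [norm_smul, norm_e2]
    norm_num
  have dB : dist pm1 pm2 = 1 := by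
    rw [dist_eq_norm, show pm1 - pm2 = (-1 : ℝ) • e2 from by
      ext j; fin_cases j <;>
        simp [pm1, pm2, e1, e2, pt, PiLp.sub_apply, PiLp.smul_apply,
          PiLp.neg_apply, PiLp.add_apply, smul_eq_mul] <;> ring]
    rw [norm_smul, norm_e2]
    norm_num
  have dC : dist pp3 pp1 = 1 := by
    rw [dist_eq_norm, show pp3 - pp1 = (-1 : ℝ) • e3 from by
      ext j; fin_cases j <;>
        simp [pp1, pp3, pm1, pm3, e1, e3, pt, PiLp.sub_apply, PiLp.smul_apply,
          PiLp.neg_apply, PiLp.add_apply, smul_eq_mul] <;> ring]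
    rw [norm_smul, norm_e3]
    norm_num
  have dD : dist pm1 pm3 = 1 := by
    rw [dist_eq_norm, show pm1 - pm3 = (-1 : ℝ) • e3 from by
      ext j; fin_cases j <;>
        simp [pm1, pm3, e1, e3, pt, PiLp.sub_apply, PiLp.smul_apply,
          PiLp.neg_apply, PiLp.add_apply, smul_eq_mul] <;> ring]
    rw [norm_smul, norm_e3]
    norm_num
  intro s
  fin_cases s <;>
    simp only [segA, segB, Lv, Matrix.cons_val_zero, Matrix.cons_val_one, Matrix.head_cons,
      Matrix.cons_val_two, Matrix.tail_cons, Matrix.cons_val_three, Matrix.cons_val_four] <;>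
    first | exact d0 | exact dA | exact dB | exact dC | exact dD

lemma seg_univ_toReal (s : Fin 5) :
    (((μH[1] : Measure (Euc 2)).restrict (SegSet s)) Set.univ).toReal = Lv s := by
  rw [Measure.restrict_apply_univ, SegSet, hausdorffMeasure_segment, ← dist_vals s,
    edist_dist, ENNReal.toReal_ofReal dist_nonneg]

lemma hΘ : ∀ s : Fin 5, h2 (Θv s) ≤ 1 := by
  intro s
  fin_cases s <;> simp only [Θv, Matrix.cons_val_zero, Matrix.cons_val_one, Matrix.head_cons,
    Matrix.cons_val_two, Matrix.tail_cons, Matrix.cons_val_three, Matrix.cons_val_four] <;>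
    first | exact h2_theta1 | exact h2_theta2 | exact h2_theta3

lemma tvH_F_le (F : MatMeas 2 2)
    (hF : ∀ B : Set (Euc 2), MeasurableSet B → ∀ i j,
      F i j B = segMass (segment ℝ pp1 pm1) θ1 e1 B i j
        + segMass (segment ℝ pp2 pp1 ∪ segment ℝ pm1 pm2) θ2 e2 B i j
        + segMass (segment ℝ pp3 pp1 ∪ segment ℝ pm1 pm3) θ3 e3 B i j) :
    tvH h2 F ≤ 6 := by
  set μs : Fin 5 → Measure (Euc 2) :=
    fun s => (μH[1] : Measure (Euc 2)).restrict (SegSet s) with hμs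
  refine Real.sSup_le ?_ (by norm_num)
  rintro r ⟨B, hmeas, hdisj, hcov, rfl⟩
  have hgen : ∀ k, genNorm h2 (fun i j => F i j (B k))
      ≤ ∑ s : Fin 5, (μs s (B k)).toReal := by
    intro k
    refine genNorm_le (Finset.sum_nonneg fun s _ => ENNReal.toReal_nonneg) _ fun M hM => ?_
    have hrepr : ∀ i j, F i j (B k)
        = ∑ s : Fin 5, (Θv s i * Ev s j) * (μs s (B k)).toReal :=
      fun i j => F_repr F hF (hmeas k) i j
    have hts : ∀ s : Fin 5, ∑ i, Θv s i * matVec M (Ev s) i ≤ 1 := by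
      intro s
      have hd := hM (Ev s) (le_of_eq (norm_Ev s))
      have hl := le_dualNorm (matVec M (Ev s)) (Θv s) (hΘ s)
      rw [Fin.sum_univ_two]
      linarith [hl, hd]
    calc frob M (fun i j => F i j (B k))
        = ∑ i, ∑ j, ∑ s : Fin 5, (μs s (B k)).toReal * (Θv s i * (M i j * Ev s j)) := by
          simp only [frob]
          refine Finset.sum_congr rfl fun i _ => Finset.sum_congr rfl fun j _ => ?_
          rw [hrepr i j, Finset.mul_sum]
          exact Finset.sum_congr rfl fun s _ => by ring
      _ = ∑ i, ∑ s : Fin 5, ∑ j, (μs s (B k)).toReal * (Θv s i * (M i j * Ev s j)) :=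
          Finset.sum_congr rfl fun i _ => Finset.sum_comm
      _ = ∑ s : Fin 5, ∑ i, ∑ j, (μs s (B k)).toReal * (Θv s i * (M i j * Ev s j)) :=
          Finset.sum_comm
      _ = ∑ s : Fin 5, (μs s (B k)).toReal * (∑ i, Θv s i * matVec M (Ev s) i) := by
          refine Finset.sum_congr rfl fun s _ => ?_
          rw [Finset.mul_sum]
          refine Finset.sum_congr rfl fun i _ => ?_
          rw [show matVec M (Ev s) i = ∑ j, M i j * Ev s j from rfl,
            Finset.mul_sum, Finset.mul_sum]
      _ ≤ ∑ s : Fin 5, (μs s (B k)).toReal * 1 := by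
          refine Finset.sum_le_sum fun s _ => ?_
          exact mul_le_mul_of_nonneg_left (hts s) ENNReal.toReal_nonneg
      _ = ∑ s : Fin 5, (μs s (B k)).toReal := by simp
  have hμtot : ∀ s : Fin 5, ∑' k, μs s (B k) = μs s Set.univ := by
    intro s
    rw [← measure_iUnion hdisj hmeas, hcov]
  have hne : ∀ (s : Fin 5) k, μs s (B k) ≠ ⊤ := by
    intro s k
    refine ne_top_of_le_ne_top ?_ (measure_mono (Set.subset_univ _))
    rw [Measure.restrict_apply_univ, SegSet, hausdorffMeasure_segment]
    exact edist_ne_top _ _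
  have hsummable : ∀ s : Fin 5, Summable fun k => (μs s (B k)).toReal := by
    intro s
    refine ENNReal.summable_toReal ?_
    rw [hμtot s]
    refine ne_top_of_le_ne_top ?_ le_rfl
    rw [Measure.restrict_apply_univ, SegSet, hausdorffMeasure_segment]
    exact edist_ne_top _ _
  have htsum_val : ∀ s : Fin 5, ∑' k, (μs s (B k)).toReal = Lv s := by
    intro s
    rw [← ENNReal.tsum_toReal_eq (hne s), hμtot s]
    exact seg_univ_toReal s
  calc (∑' k, genNorm h2 fun i j => F i j (B k))
      ≤ ∑' k, ∑ s : Fin 5, (μs s (B k)).toReal := by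
        refine Summable.tsum_le_tsum hgen ?_ ?_
        · exact Summable.of_nonneg_of_le (fun k => genNorm_nonneg _) hgen
            (summable_sum fun s _ => hsummable s)
        · exact summable_sum fun s _ => hsummable s
    _ = ∑ s : Fin 5, ∑' k, (μs s (B k)).toReal := Summable.tsum_finsetSum fun s _ => hsummable s
    _ = ∑ s : Fin 5, Lv s := Finset.sum_congr rfl fun s _ => htsum_val s
    _ = 6 := by rw [Fin.sum_univ_five]; norm_num [Lv, Matrix.cons_val_two, Matrix.cons_val_three, Matrix.cons_val_four, Matrix.tail_cons, Matrix.head_cons]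

lemma tv_bddAbove (G : MatMeas 2 2) :
    BddAbove {r | ∃ B : ℕ → Set (Euc 2), (∀ k, MeasurableSet (B k)) ∧
      Pairwise (Function.onFun Disjoint B) ∧ (⋃ k, B k) = Set.univ ∧
      r = ∑' k, genNorm h2 (fun i j => G i j (B k))} := by
  classical
  set pos : Fin 2 → Fin 2 → Measure (Euc 2) :=
    fun i j => (G i j).toJordanDecomposition.posPart with hpos
  set neg : Fin 2 → Fin 2 → Measure (Euc 2) :=
    fun i j => (G i j).toJordanDecomposition.negPart with hneg
  refine ⟨∑ p : Fin 2 × Fin 2,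
    ((pos p.1 p.2 Set.univ).toReal + (neg p.1 p.2 Set.univ).toReal), ?_⟩
  rintro r ⟨B, hmeas, hdisj, hcov, rfl⟩
  set v : Fin 2 × Fin 2 → ℕ → ℝ :=
    fun p k => (pos p.1 p.2 (B k)).toReal + (neg p.1 p.2 (B k)).toReal with hv
  have hvsum : ∀ p : Fin 2 × Fin 2, Summable (v p) := by
    intro p
    refine Summable.add ?_ ?_ <;>
    · refine ENNReal.summable_toReal ?_
      rw [← measure_iUnion hdisj hmeas, hcov]
      exact measure_ne_top _ _
  have hbk : ∀ k, genNorm h2 (fun i j => G i j (B k)) ≤ ∑ p : Fin 2 × Fin 2, v p k := by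
    intro k
    refine genNorm_le (Finset.sum_nonneg fun p _ =>
      add_nonneg ENNReal.toReal_nonneg ENNReal.toReal_nonneg) _ fun M hM => ?_
    refine le_trans (frob_abs_le hM _) ?_
    rw [Fintype.sum_prod_type]
    refine Finset.sum_le_sum fun i _ => Finset.sum_le_sum fun j _ => ?_
    rw [jordan_apply (G i j) (hmeas k)]
    rw [abs_le]
    constructor <;>
      [linarith [ENNReal.toReal_nonneg (a := pos i j (B k)),
        ENNReal.toReal_nonneg (a := neg i j (B k))];
       linarith [ENNReal.toReal_nonneg (a := pos i j (B k)),
        ENNReal.toReal_nonneg (a := neg i j (B k))]]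
  calc (∑' k, genNorm h2 fun i j => G i j (B k))
      ≤ ∑' k, ∑ p : Fin 2 × Fin 2, v p k := by
        refine Summable.tsum_le_tsum hbk ?_ ?_
        · exact Summable.of_nonneg_of_le (fun k => genNorm_nonneg _) hbk
            (summable_sum fun p _ => hvsum p)
        · exact summable_sum fun p _ => hvsum p
    _ = ∑ p : Fin 2 × Fin 2, ∑' k, v p k := Summable.tsum_finsetSum fun p _ => hvsum p
    _ ≤ ∑ p : Fin 2 × Fin 2,
        ((pos p.1 p.2 Set.univ).toReal + (neg p.1 p.2 Set.univ).toReal) := by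
      refine Finset.sum_le_sum fun p _ => ?_
      rw [hv]
      rw [Summable.tsum_add (ENNReal.summable_toReal (by rw [← measure_iUnion hdisj hmeas, hcov]; exact measure_ne_top _ _))
        (ENNReal.summable_toReal (by rw [← measure_iUnion hdisj hmeas, hcov]; exact measure_ne_top _ _))]
      have h1 : ∑' k, (pos p.1 p.2 (B k)).toReal = (pos p.1 p.2 Set.univ).toReal := by
        rw [← ENNReal.tsum_toReal_eq (fun k => measure_ne_top _ _),
          ← measure_iUnion hdisj hmeas, hcov]
      have h2 : ∑' k, (neg p.1 p.2 (B k)).toReal = (neg p.1 p.2 Set.univ).toReal := by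
        rw [← ENNReal.tsum_toReal_eq (fun k => measure_ne_top _ _),
          ← measure_iUnion hdisj hmeas, hcov]
      rw [h1, h2]

lemma le_tvH (G : MatMeas 2 2) :
    genNorm h2 (fun i j => G i j Set.univ) ≤ tvH h2 G := by
  classical
  set Bf : ℕ → Set (Euc 2) := fun k => if k = 0 then Set.univ else ∅ with hBf
  have hmeas : ∀ k, MeasurableSet (Bf k) := by
    intro k; by_cases h : k = 0 <;> simp [hBf, h]
  have hdisj : Pairwise (Function.onFun Disjoint Bf) := by
    intro a b hab
    rcases eq_or_ne a 0 with ha | ha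
    · have hb : b ≠ 0 := by rw [ha] at hab; exact hab.symm
      simp [Function.onFun, hBf, ha, hb]
    · simp [Function.onFun, hBf, ha]
  have hcov : ⋃ k, Bf k = Set.univ := by
    ext x
    simp only [Set.mem_iUnion, Set.mem_univ, iff_true]
    exact ⟨0, by simp [hBf]⟩
  have hval : ∑' k, genNorm h2 (fun i j => G i j (Bf k))
      = genNorm h2 (fun i j => G i j Set.univ) := by
    rw [tsum_eq_single 0 ?_]
    · simp [hBf]
    · intro b hb
      have hBe : Bf b = ∅ := by simp [hBf, hb]
      have : (fun i j => G i j (Bf b)) = (0 : Fin 2 → Fin 2 → ℝ) := by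
        funext i j; rw [hBe]; exact (G i j).empty
      rw [this, genNorm_zero]
  have hmem : genNorm h2 (fun i j => G i j Set.univ) ∈
      {r | ∃ B : ℕ → Set (Euc 2), (∀ k, MeasurableSet (B k)) ∧
        Pairwise (Function.onFun Disjoint B) ∧ (⋃ k, B k) = Set.univ ∧
        r = ∑' k, genNorm h2 (fun i j => G i j (B k))} :=
    ⟨Bf, hmeas, hdisj, hcov, hval.symm⟩
  exact le_csSup (tv_bddAbove G) hmem

end S14
namespace S14

/-! ### Section 10: the calibration -/

lemma calib (F0 : VecMeas 2 2)
    (hF0 : ∀ B : Set (Euc 2), MeasurableSet B → ∀ i,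
      F0 i B = θ2 i * (dirac01 pm2 B - dirac01 pp2 B)
        + θ3 i * (dirac01 pm3 B - dirac01 pp3 B))
    (G : MatMeas 2 2) (hGc : suppInCpt G) (hGb : isBoundary G F0) :
    frob M0 (fun i j => G i j Set.univ) = 6 := by
  obtain ⟨K, hK, hsupp⟩ := hGc
  set K' : Set (Euc 2) := K ∪ {pm2, pp2, pm3, pp3} with hK'
  have hK'c : IsCompact K' := hK.union (Set.toFinite _).isCompact
  obtain ⟨r, hr0, hrsub⟩ := hK'c.isBounded.subset_ball_lt 0 0
  set χ : ContDiffBump (0 : Euc 2) := ⟨r, 2*r, hr0, by linarith⟩ with hχ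
  set Φ : Euc 2 →L[ℝ] (Fin 2 → ℝ) :=
    ContinuousLinearMap.pi (fun i => innerSL ℝ (![e2, e3] i)) with hΦ
  have hΦ_apply : ∀ (x : Euc 2) (i : Fin 2), Φ x i = inner ℝ (![e2, e3] i) x :=
    fun x i => rfl
  set ψ : Euc 2 → Fin 2 → ℝ := fun x => χ x • Φ x with hψdef
  have hψ : ContDiff ℝ (⊤ : ℕ∞) ψ := χ.contDiff.smul Φ.contDiff
  have hψc : HasCompactSupport ψ := χ.hasCompactSupport.smul_right
  have hψeq : ∀ y ∈ Metric.ball (0 : Euc 2) r, ψ y = Φ y := by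
    intro y hy
    rw [hψdef]
    simp only []
    rw [χ.one_of_mem_closedBall (Metric.ball_subset_closedBall hy), one_smul]
  have hjac : ∀ x ∈ Metric.ball (0 : Euc 2) r, ∀ i j, jac ψ x i j = M0 i j := by
    intro x hx i j
    have hev : ψ =ᶠ[nhds x] ⇑Φ :=
      Filter.eventually_of_mem (Metric.isOpen_ball.mem_nhds hx) hψeq
    simp only [jac]
    rw [hev.fderiv_eq, Φ.fderiv]
    rw [hΦ_apply, PiLp.inner_apply, Fin.sum_univ_two]
    simp only [RCLike.inner_apply, starRingEnd_apply, star_trivial,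
      EuclideanSpace.single_apply]
    rw [M0]
    fin_cases j <;> simp
  -- values of Φ at the four points
  have hsq : Real.sqrt 3 * Real.sqrt 3 = 3 := sqrt3_sq
  have vpm2 : Φ pm2 0 = 3 / 2 := by
    rw [hΦ_apply, PiLp.inner_apply, Fin.sum_univ_two]
    simp only [RCLike.inner_apply, starRingEnd_apply, star_trivial,
      Matrix.cons_val_zero]
    rw [coord_pm2.1, coord_pm2.2]
    rw [show e2 0 = 1/2 from by simp [e2, pt], show e2 1 = Real.sqrt 3 / 2 from by simp [e2, pt]]
    nlinarith [hsq]
  have vpm3 : Φ pm3 1 = 3 / 2 := by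
    rw [hΦ_apply, PiLp.inner_apply, Fin.sum_univ_two]
    simp only [RCLike.inner_apply, starRingEnd_apply, star_trivial,
      Matrix.cons_val_one, Matrix.head_cons, Matrix.cons_val_zero]
    rw [coord_pm3.1, coord_pm3.2]
    rw [show e3 0 = 1/2 from by simp [e3, pt],
      show e3 1 = -(Real.sqrt 3) / 2 from by simp [e3, pt]]
    nlinarith [hsq]
  have vpp2 : Φ pp2 0 = -(3 / 2) := by
    have : Φ pp2 = -(Φ pm2) := by rw [show pp2 = -pm2 from rfl, map_neg]
    rw [this, Pi.neg_apply, vpm2]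
  have vpp3 : Φ pp3 1 = -(3 / 2) := by
    have : Φ pp3 = -(Φ pm3) := by rw [show pp3 = -pm3 from rfl, map_neg]
    rw [this, Pi.neg_apply, vpm3]
  -- the four points are in the ball
  have hmem : ∀ p ∈ ({pm2, pp2, pm3, pp3} : Set (Euc 2)), p ∈ Metric.ball (0 : Euc 2) r :=
    fun p hp => hrsub (Set.mem_union_right _ hp)
  -- boundary identity
  have hb := hGb ψ hψ hψc
  -- LHS
  have hLHS : (∑ i, ∑ j, sInt (G i j) fun x => jac ψ x i j)
      = frob M0 (fun i j => G i j Set.univ) := by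
    refine Finset.sum_congr rfl fun i _ => Finset.sum_congr rfl fun j _ => ?_
    have hKm : MeasurableSet K := hK.isClosed.measurableSet
    have hnull := jordan_null (G i j) hKm.compl
      (fun C hC hsub => hsupp C hC (Set.disjoint_left.mpr fun x hx => hsub hx) i j)
    have haep : ∀ᵐ x ∂(G i j).toJordanDecomposition.posPart, x ∈ K := by
      rw [MeasureTheory.ae_iff]
      have : {x : Euc 2 | ¬ x ∈ K} = Kᶜ := rfl
      rw [this, hnull.1]
    have haen : ∀ᵐ x ∂(G i j).toJordanDecomposition.negPart, x ∈ K := by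
      rw [MeasureTheory.ae_iff]
      have : {x : Euc 2 | ¬ x ∈ K} = Kᶜ := rfl
      rw [this, hnull.2]
    have hcongr : ∀ {μ : Measure (Euc 2)}, (∀ᵐ x ∂μ, x ∈ K) →
        ∫ x, jac ψ x i j ∂μ = (μ Set.univ).toReal * M0 i j := by
      intro μ hμ
      rw [integral_congr_ae (g := fun _ => M0 i j)
        (hμ.mono fun x hx => hjac x (hrsub (Set.mem_union_left _ hx)) i j)]
      rw [integral_const, smul_eq_mul]
      rfl
    rw [sInt, hcongr haep, hcongr haen]
    have hj := jordan_apply (G i j) MeasurableSet.univ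
    simp only [hj]
    ring
  -- RHS
  have hRHS : (∑ i, sInt (F0 i) fun x => ψ x i) = 6 := by
    have hs : ∀ i, sInt (F0 i) (fun x => ψ x i)
        = θ2 i * (ψ pm2 i - ψ pp2 i) + θ3 i * (ψ pm3 i - ψ pp3 i) := fun i =>
      sInt_F0 F0 hF0 i _ (psi_comp_continuous ψ hψ i) (psi_comp_cpt ψ hψc i)
    rw [Fin.sum_univ_two, hs 0, hs 1]
    rw [hψeq pm2 (hmem pm2 (by simp)), hψeq pp2 (hmem pp2 (by simp)),
      hψeq pm3 (hmem pm3 (by simp)), hψeq pp3 (hmem pp3 (by simp))]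
    rw [vpm2, vpm3, vpp2, vpp3]
    simp only [θ2, θ3, Matrix.cons_val_zero, Matrix.cons_val_one, Matrix.head_cons]
    ring
  rw [hLHS] at hb
  rw [hb, hRHS]

end S14
/-- two sources and sinks: for the boundary datum
`F₀ = θ²(δ_{p₋₂} - δ_{p₊₂}) + θ³(δ_{p₋₃} - δ_{p₊₃})`, the network
`F = θ¹⊗e₁ ℋ¹⌞[p₊₁,p₋₁] + θ²⊗e₂ ℋ¹⌞([p₊₂,p₊₁] ∪ [p₋₁,p₋₂]) + θ³⊗e₃ ℋ¹⌞([p₊₃,p₊₁] ∪ [p₋₁,p₋₃])`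
satisfies `∂F = F₀` and minimizes `|·|_H` among compactly supported measures `G`
with `∂G = F₀`. -/
theorem statement14
    (F : MatMeas 2 2)
    (hF : ∀ B : Set (Euc 2), MeasurableSet B → ∀ i j,
      F i j B = segMass (segment ℝ pp1 pm1) θ1 e1 B i j
        + segMass (segment ℝ pp2 pp1 ∪ segment ℝ pm1 pm2) θ2 e2 B i j
        + segMass (segment ℝ pp3 pp1 ∪ segment ℝ pm1 pm3) θ3 e3 B i j)
    (F0 : VecMeas 2 2)
    (hF0 : ∀ B : Set (Euc 2), MeasurableSet B → ∀ i,
      F0 i B = θ2 i * (dirac01 pm2 B - dirac01 pp2 B)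
        + θ3 i * (dirac01 pm3 B - dirac01 pp3 B)) :
    isBoundary F F0 ∧
    ∀ G : MatMeas 2 2, suppInCpt G → isBoundary G F0 → tvH h2 F ≤ tvH h2 G := by
  refine ⟨S14.boundary_F F hF F0 hF0, fun G hGc hGb => ?_⟩
  have h6 : frob S14.M0 (fun i j => G i j Set.univ) = 6 := S14.calib F0 hF0 G hGc hGb
  have hle : tvH h2 F ≤ 6 := S14.tvH_F_le F hF
  have hge : (6 : ℝ) ≤ tvH h2 G := by
    rw [← h6]
    exact le_trans (S14.le_genNorm S14.M0_adm _) (S14.le_tvH G)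
  linarith
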